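/- For any real r ∈ (0,1) and any integer k ≥ 1, ∑_{t=0}^{k-1} r^{k-(t+1)} / (t+1) ≤ (2 B(r) + 7/(1−r²)) · (1/k), where B(r) = sup_{z ≥ 1/2} z r^z log(1+z) (a finite quantity). -/

import Mathlib

open scoped BigOperators
open Finset

private lemma bern_aux (r : ℝ) (h0 : 0 ≤ r) (h1 : r ≤ 1) (n : ℕ) :
    ((n : ℝ) + 1) * r ^ n * (1 - r) ≤ 1 := by
  have h2 : ((n : ℝ) + 1) * r ^ n ≤ ∑ j ∈ range (n + 1), r ^ j := by
    calc ((n : ℝ) + 1) * r ^ n = ∑ _j ∈ range (n + 1), r ^ n := by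
          rw [Finset.sum_const, card_range]; push_cast; ring
      _ ≤ ∑ j ∈ range (n + 1), r ^ j := by
          refine Finset.sum_le_sum fun j hj => ?_
          exact pow_le_pow_of_le_one h0 h1 (Nat.le_of_lt_succ (mem_range.mp hj))
  have h3 := geom_sum_mul r (n + 1)
  have h4 := mul_le_mul_of_nonneg_right h2 (by linarith : (0:ℝ) ≤ 1 - r)
  nlinarith [pow_nonneg h0 (n + 1)]

private lemma geom_sum_le_aux (r : ℝ) (h0 : 0 ≤ r) (h1 : r < 1) (n : ℕ) :
    ∑ j ∈ range n, r ^ j ≤ 1 / (1 - r) := by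
  rw [le_div_iff₀ (by linarith : (0:ℝ) < 1 - r)]
  have h3 := geom_sum_mul r n
  nlinarith [pow_nonneg h0 n]

set_option maxHeartbeats 1000000 in
theorem geometric_harmonic_convolution_bound
    (r : ℝ) (hr : r ∈ Set.Ioo (0 : ℝ) 1) (k : ℕ) (hk : 1 ≤ k) :
    ∑ t ∈ Finset.range k, r ^ (k - (t + 1)) / (t + 1 : ℝ) ≤
      (2 * sSup ((fun z : ℝ => z * r ^ z * Real.log (1 + z)) '' {z : ℝ | 1 / 2 ≤ z})
        + 7 / (1 - r ^ 2)) * (1 / (k : ℝ)) := by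
  obtain ⟨hr0, hr1⟩ := hr
  set B := sSup ((fun z : ℝ => z * r ^ z * Real.log (1 + z)) '' {z : ℝ | 1 / 2 ≤ z}) with hBdef
  set K : ℝ := (k : ℝ) with hKdef
  clear_value B K
  have hK1 : (1 : ℝ) ≤ K := by rw [hKdef]; exact_mod_cast hk
  have hK0 : (0 : ℝ) < K := by linarith
  have hu : (0 : ℝ) < 1 - r ^ 2 := by nlinarith
  -- log r is negative
  have hlogr : Real.log r < 0 := Real.log_neg hr0 hr1
  set a : ℝ := -Real.log r with hadef
  have ha : 0 < a := by simp only [hadef]; linarith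
  clear_value a
  -- boundedness of the sup set
  have hbdd : BddAbove ((fun z : ℝ => z * r ^ z * Real.log (1 + z)) '' {z : ℝ | 1 / 2 ≤ z}) := by
    refine ⟨54 / a ^ 3, ?_⟩
    rintro y ⟨z, hz, rfl⟩
    simp only [Set.mem_setOf_eq] at hz
    have hz0 : (0 : ℝ) < z := by linarith
    have hlog : Real.log (1 + z) ≤ z := by
      have := Real.log_le_sub_one_of_pos (show (0:ℝ) < 1 + z by linarith)
      linarith
    have hrz : r ^ z = Real.exp (-(a * z)) := by
      rw [Real.rpow_def_of_pos hr0, hadef]; ring_nf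
    have hexp3 : (a * z / 3) ^ 3 ≤ Real.exp (a * z) := by
      have h1 : a * z / 3 + 1 ≤ Real.exp (a * z / 3) := Real.add_one_le_exp _
      have h2 : (a * z / 3) ^ 3 ≤ (a * z / 3 + 1) ^ 3 := by
        have hpos : 0 ≤ a * z / 3 := by
          apply div_nonneg (mul_nonneg ha.le hz0.le); norm_num
        nlinarith
      have h3 : (a * z / 3 + 1) ^ 3 ≤ Real.exp (a * z / 3) ^ 3 := by
        have hpos : 0 ≤ a * z / 3 + 1 := by
          have : 0 ≤ a * z / 3 := by
            apply div_nonneg (mul_nonneg ha.le hz0.le); norm_num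
          linarith
        exact pow_le_pow_left₀ hpos h1 3
      have h4 : Real.exp (a * z / 3) ^ 3 = Real.exp (a * z) := by
        rw [← Real.exp_nat_mul]; norm_num; ring_nf
      linarith
    have hexppos : 0 < Real.exp (a * z) := Real.exp_pos _
    have hcube : 0 < (a * z / 3) ^ 3 := by
      apply pow_pos
      apply div_pos (mul_pos ha hz0); norm_num
    have hrz_le : r ^ z ≤ 27 / (a * z) ^ 3 := by
      rw [hrz, Real.exp_neg]
      have := one_div_le_one_div_of_le hcube hexp3
      calc (Real.exp (a * z))⁻¹ = 1 / Real.exp (a * z) := by rw [one_div]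
        _ ≤ 1 / ((a * z / 3) ^ 3) := this
        _ = 27 / (a * z) ^ 3 := by field_simp; ring
    calc z * r ^ z * Real.log (1 + z) ≤ z * r ^ z * z := by
          have : 0 ≤ z * r ^ z := mul_nonneg hz0.le (Real.rpow_nonneg hr0.le z)
          exact mul_le_mul_of_nonneg_left hlog this
      _ = z ^ 2 * r ^ z := by ring
      _ ≤ z ^ 2 * (27 / (a * z) ^ 3) := by
          exact mul_le_mul_of_nonneg_left hrz_le (by positivity)
      _ = 27 / (a ^ 3 * z) := by
          rw [mul_pow]; field_simp
      _ ≤ 54 / a ^ 3 := by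
          rw [div_le_div_iff₀ (mul_pos (pow_pos ha 3) hz0) (pow_pos ha 3)]
          nlinarith [pow_pos ha 3]
  have hmemB : ∀ z : ℝ, 1 / 2 ≤ z → z * r ^ z * Real.log (1 + z) ≤ B := by
    intro z hz
    rw [hBdef]
    exact le_csSup hbdd ⟨z, hz, rfl⟩
  have hB0 : 0 ≤ B := by
    have h1 := hmemB (1 / 2) le_rfl
    have h2 : 0 ≤ (1 / 2 : ℝ) * r ^ (1 / 2 : ℝ) * Real.log (1 + 1 / 2) :=
      mul_nonneg (mul_nonneg (by norm_num) (Real.rpow_nonneg hr0.le _))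
        (Real.log_nonneg (by norm_num))
    linarith
  -- key bound from B at z = K/2
  have hBk : r ^ (K / 2 : ℝ) * Real.log (1 + K / 2) ≤ 2 * B / K := by
    have h := hmemB (K / 2) (by linarith)
    rw [le_div_iff₀ hK0]
    nlinarith [h]
  set m : ℕ := k / 2 with hmdef
  clear_value m
  have hmk : m ≤ k := by rw [hmdef]; exact Nat.div_le_self _ _
  have hmK : (m : ℝ) ≤ K / 2 := by
    have := Nat.cast_div_le (α := ℝ) (m := k) (n := 2)
    rw [hmdef, hKdef]
    simpa using this
  have hm1K : K ≤ 2 * ((m : ℝ) + 1) := by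
    have hnat : k ≤ 2 * (m + 1) := by omega
    have h2 : (k : ℝ) ≤ 2 * ((m : ℝ) + 1) := by exact_mod_cast hnat
    rw [hKdef]; exact h2
  -- split the sum
  have hsplit : ∑ t ∈ range k, r ^ (k - (t + 1)) / (t + 1 : ℝ) =
      (∑ t ∈ range m, r ^ (k - (t + 1)) / (t + 1 : ℝ)) +
      ∑ t ∈ Ico m k, r ^ (k - (t + 1)) / (t + 1 : ℝ) := by
    rw [← Finset.sum_range_add_sum_Ico _ hmk]
  -- tail bound
  have htail : ∑ t ∈ Ico m k, r ^ (k - (t + 1)) / (t + 1 : ℝ) ≤ 4 / (K * (1 - r ^ 2)) := by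
    have step1 : ∑ t ∈ Ico m k, r ^ (k - (t + 1)) / (t + 1 : ℝ) ≤
        ∑ t ∈ Ico m k, r ^ (k - (t + 1)) * (2 / K) := by
      refine Finset.sum_le_sum fun t ht => ?_
      obtain ⟨htm, htk⟩ := mem_Ico.mp ht
      have htm' : (m : ℝ) ≤ (t : ℝ) := by exact_mod_cast htm
      have ht1 : (0 : ℝ) < (t : ℝ) + 1 := by positivity
      rw [div_eq_mul_one_div]
      refine mul_le_mul_of_nonneg_left ?_ (pow_nonneg hr0.le _)
      rw [div_le_div_iff₀ ht1 hK0]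
      linarith
    have step2 : ∑ t ∈ Ico m k, r ^ (k - (t + 1)) * (2 / K) ≤
        ∑ t ∈ range k, r ^ (k - (t + 1)) * (2 / K) := by
      refine Finset.sum_le_sum_of_subset_of_nonneg ?_ (fun t _ _ =>
        mul_nonneg (pow_nonneg hr0.le _) (div_nonneg (by norm_num) hK0.le))
      rw [range_eq_Ico]; exact Finset.Ico_subset_Ico (Nat.zero_le m) le_rfl
    have step3 : ∑ t ∈ range k, r ^ (k - (t + 1)) * (2 / K) = (2 / K) * ∑ t ∈ range k, r ^ t := by
      rw [← Finset.sum_mul, ← Finset.sum_range_reflect (fun j => r ^ j) k, mul_comm]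
      congr 1
      refine Finset.sum_congr rfl fun t ht => ?_
      congr 1
      omega
    have step4 : ∑ t ∈ range k, r ^ t ≤ 1 / (1 - r) := geom_sum_le_aux r hr0.le hr1 k
    have step5 : (2 / K) * (1 / (1 - r)) ≤ 4 / (K * (1 - r ^ 2)) := by
      rw [div_mul_div_comm, div_le_div_iff₀ (by nlinarith) (by positivity)]
      nlinarith [mul_nonneg (mul_nonneg hK0.le (sub_nonneg.2 hr1.le)) (sub_nonneg.2 hr1.le)]
    calc ∑ t ∈ Ico m k, r ^ (k - (t + 1)) / (t + 1 : ℝ)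
        ≤ ∑ t ∈ range k, r ^ (k - (t + 1)) * (2 / K) := le_trans step1 step2
      _ = (2 / K) * ∑ t ∈ range k, r ^ t := step3
      _ ≤ (2 / K) * (1 / (1 - r)) := by
          exact mul_le_mul_of_nonneg_left step4 (by positivity)
      _ ≤ 4 / (K * (1 - r ^ 2)) := step5
  -- head bound
  have hhead : ∑ t ∈ range m, r ^ (k - (t + 1)) / (t + 1 : ℝ) ≤
      2 / (K * (1 - r ^ 2)) + 2 * B / K := by
    rcases Nat.eq_zero_or_pos m with hm0 | hm0
    · rw [hm0]
      simp only [range_zero, Finset.sum_empty]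
      have h1 : (0:ℝ) ≤ 2 / (K * (1 - r ^ 2)) := by positivity
      have h2 : (0:ℝ) ≤ 2 * B / K := div_nonneg (by linarith) hK0.le
      linarith
    -- m ≥ 1, so k ≥ 2
    have hk2 : 2 ≤ k := by omega
    -- t = 0 term
    have hzero : r ^ (k - 1) ≤ 2 / (K * (1 - r ^ 2)) := by
      have hb := bern_aux r hr0.le hr1.le (k - 1)
      have hcast : ((k - 1 : ℕ) : ℝ) + 1 = K := by
        have : ((k - 1 : ℕ) : ℝ) = K - 1 := by
          rw [Nat.cast_sub hk]; simp [hKdef]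
        linarith
      rw [hcast] at hb
      rw [le_div_iff₀ (mul_pos hK0 hu)]
      set p : ℝ := r ^ (k - 1) with hpdef
      clear_value p
      have h2 := mul_le_mul_of_nonneg_right hb (by linarith : (0:ℝ) ≤ 1 + r)
      nlinarith [h2]
    -- remaining head terms
    have hrest : ∑ t ∈ Ico 1 m, r ^ (k - (t + 1)) / (t + 1 : ℝ) ≤ 2 * B / K := by
      set R : ℝ := r ^ (K / 2 : ℝ) with hRdef
      have hR0 : 0 ≤ R := Real.rpow_nonneg hr0.le _
      have step1 : ∑ t ∈ Ico 1 m, r ^ (k - (t + 1)) / (t + 1 : ℝ) ≤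
          ∑ t ∈ Ico 1 m, R / (t + 1 : ℝ) := by
        refine Finset.sum_le_sum fun t ht => ?_
        obtain ⟨ht1, htm⟩ := mem_Ico.mp ht
        have hexp : K / 2 ≤ ((k - (t + 1) : ℕ) : ℝ) := by
          have htk : t + 1 ≤ m := htm
          have hc : ((k - (t + 1) : ℕ) : ℝ) = K - ((t : ℝ) + 1) := by
            rw [Nat.cast_sub (by omega), hKdef]; push_cast; ring
          have ht1m : (t : ℝ) + 1 ≤ (m : ℝ) := by exact_mod_cast htk
          rw [hc]; linarith
        have hle : r ^ (k - (t + 1)) ≤ R := by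
          rw [← Real.rpow_natCast r (k - (t + 1))]
          exact Real.rpow_le_rpow_of_exponent_ge hr0 hr1.le hexp
        have ht1 : (0 : ℝ) < (t : ℝ) + 1 := by positivity
        exact div_le_div_of_nonneg_right hle ht1.le
      have step2 : ∑ t ∈ Ico 1 m, R / (t + 1 : ℝ) = R * ∑ t ∈ Ico 1 m, 1 / (t + 1 : ℝ) := by
        rw [Finset.mul_sum]
        refine Finset.sum_congr rfl fun t _ => ?_
        field_simp
      have hharm : ∑ t ∈ Ico 1 m, (1 : ℝ) / (t + 1 : ℝ) ≤ Real.log m := by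
        have hfull : ∑ t ∈ range m, (1 : ℝ) / (t + 1 : ℝ) = (harmonic m : ℝ) := by
          rw [harmonic]
          push_cast
          refine Finset.sum_congr rfl fun t _ => ?_
          rw [one_div]
        have hsplit0 : ∑ t ∈ range m, (1 : ℝ) / (t + 1 : ℝ) =
            1 + ∑ t ∈ Ico 1 m, (1 : ℝ) / (t + 1 : ℝ) := by
          rw [range_eq_Ico, ← Finset.sum_Ico_consecutive _ (Nat.zero_le 1) hm0]
          norm_num
        have hlb := harmonic_le_one_add_log m
        rw [hfull] at hsplit0
        linarith
      have hlogle : Real.log m ≤ Real.log (1 + K / 2) := by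
        refine Real.log_le_log (by exact_mod_cast hm0) ?_
        linarith
      calc ∑ t ∈ Ico 1 m, r ^ (k - (t + 1)) / (t + 1 : ℝ)
          ≤ R * ∑ t ∈ Ico 1 m, 1 / (t + 1 : ℝ) := by rw [← step2]; exact step1
        _ ≤ R * Real.log (1 + K / 2) := by
            exact mul_le_mul_of_nonneg_left (hharm.trans hlogle) hR0
        _ ≤ 2 * B / K := hBk
    have hheadsplit : ∑ t ∈ range m, r ^ (k - (t + 1)) / (t + 1 : ℝ) =
        r ^ (k - 1) + ∑ t ∈ Ico 1 m, r ^ (k - (t + 1)) / (t + 1 : ℝ) := by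
      rw [range_eq_Ico, ← Finset.sum_Ico_consecutive _ (Nat.zero_le 1) hm0]
      norm_num
    rw [hheadsplit]
    exact add_le_add hzero hrest
  -- assemble
  have hKne : K ≠ 0 := ne_of_gt hK0
  have hune : (1 - r ^ 2) ≠ 0 := ne_of_gt hu
  have hgap : (2 * B + 7 / (1 - r ^ 2)) * (1 / K) =
      2 / (K * (1 - r ^ 2)) + 2 * B / K + 4 / (K * (1 - r ^ 2)) + 1 / (K * (1 - r ^ 2)) := by
    field_simp
    ring
  rw [hsplit, hgap]
  have hpos : 0 ≤ 1 / (K * (1 - r ^ 2)) := le_of_lt (one_div_pos.mpr (mul_pos hK0 hu))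
  linarith [add_le_add hhead htail]
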